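/- Let n be a natural number, let λ₀, ..., λ_{2n} ∈ ℝ, and define q̆(x) = exp(−∑_{i=0}^{2n} λ_i x^i). Assume ∫_ℝ q̆ = 1 and ∫ |x|^l q̆(x) dx < ∞ for l ≤ 2n. Let τ be a probability density on ℝ with ∫ x^l τ(x) dx = ∫ x^l q̆(x) dx for l = 0, ..., 2n, with τ log τ integrable and x^l τ integrable for l ≤ 2n. Then V(q̆, τ) ≤ 3·( −1 + (1 + (4/9)(H[q̆] − H[τ]))^{1/2} )^{1/2}, where V(p, q) = sup_{x∈ℝ} | ∫_{(−∞, x]} (p(t) − q(t)) dt |. -/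

import Mathlib

open MeasureTheory Finset

set_option maxHeartbeats 1000000


/-- `t log t - t + 1 ≥ (1-t)²/2` on `[0,1]`. -/
lemma core1 (t : ℝ) (h0 : 0 ≤ t) (h1 : t ≤ 1) :
    (1 - t) ^ 2 / 2 ≤ t * Real.log t - t + 1 := by
  set F : ℝ → ℝ := fun t => t * Real.log t - t + 1 - (1 - t) ^ 2 / 2 with hF
  have hanti : AntitoneOn F (Set.Icc 0 1) := by
    apply antitoneOn_of_deriv_nonpos (convex_Icc 0 1)
    · apply ContinuousOn.sub
      · exact (Real.continuous_mul_log.sub continuous_id).add continuous_const |>.continuousOn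
      · fun_prop
    · intro x hx
      rw [interior_Icc] at hx
      have h := ((Real.hasDerivAt_mul_log hx.1.ne').sub (hasDerivAt_id x)).add_const 1
      have h2 := h.sub (((hasDerivAt_id x).const_sub 1).pow 2 |>.div_const 2)
      exact h2.differentiableAt.differentiableWithinAt
    · intro x hx
      rw [interior_Icc] at hx
      have h := ((Real.hasDerivAt_mul_log hx.1.ne').sub (hasDerivAt_id x)).add_const 1
      have h2 := h.sub (((hasDerivAt_id x).const_sub 1).pow 2 |>.div_const 2)
      simp only [id_eq] at h2
      rw [show deriv F x = _ from h2.deriv]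
      have hl := Real.log_le_sub_one_of_pos hx.1
      nlinarith [hx.2]
  have := hanti (Set.mem_Icc.2 ⟨h0, h1⟩) (Set.mem_Icc.2 ⟨zero_le_one, le_refl 1⟩) h1
  simp only [hF, Real.log_one] at this
  nlinarith [this]

/-- `-log u - (1-u) - (1-u)²/2 ≥ 0` on `(0,1]`. -/
lemma core2 (u : ℝ) (h0 : 0 < u) (h1 : u ≤ 1) :
    1 - u + (1 - u) ^ 2 / 2 ≤ -Real.log u := by
  set G : ℝ → ℝ := fun u => -Real.log u - (1 - u) - (1 - u) ^ 2 / 2 with hG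
  have hanti : AntitoneOn G (Set.Ioc 0 1) := by
    apply antitoneOn_of_deriv_nonpos (convex_Ioc 0 1)
    · apply ContinuousOn.sub
      · apply ContinuousOn.sub
        · exact (Real.continuousOn_log.mono (by intro x hx; exact ne_of_gt hx.1)).neg
        · fun_prop
      · fun_prop
    · intro x hx
      rw [interior_Ioc] at hx
      have h := (((Real.hasDerivAt_log hx.1.ne').neg).sub ((hasDerivAt_id x).const_sub 1)).sub
        (((hasDerivAt_id x).const_sub 1).pow 2 |>.div_const 2)
      exact h.differentiableAt.differentiableWithinAt
    · intro x hx
      rw [interior_Ioc] at hx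
      have h := (((Real.hasDerivAt_log hx.1.ne').neg).sub ((hasDerivAt_id x).const_sub 1)).sub
        (((hasDerivAt_id x).const_sub 1).pow 2 |>.div_const 2)
      simp only [id_eq] at h
      rw [show deriv G x = _ from h.deriv]
      have hx1 : 0 < x := hx.1
      have : -x⁻¹ - -1 - 2 * (1 - x) ^ 1 * -1 / 2 = -((1-x)^2) / x := by
        field_simp; ring
      rw [show (2:ℕ) - 1 = 1 from rfl] at *
      nlinarith [sq_nonneg (1 - x), mul_pos hx1 hx1, inv_pos.2 hx1, mul_inv_cancel₀ hx1.ne']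
  have := hanti (Set.mem_Ioc.2 ⟨h0, h1⟩) (Set.mem_Ioc.2 ⟨zero_lt_one, le_refl 1⟩) h1
  simp only [hG, Real.log_one] at this
  nlinarith [this]
/-- pointwise Gibbs: `r log(r/s) ≥ r - s` for `r ≥ 0`, `s > 0`. -/
lemma gibbs_pt (r s : ℝ) (hr : 0 ≤ r) (hs : 0 < s) :
    r - s ≤ r * Real.log (r / s) := by
  rcases eq_or_lt_of_le hr with h | h
  · simp [← h, hs.le]
  · have hl := Real.log_le_sub_one_of_pos (div_pos hs h)
    have hle : Real.log (s / r) = - Real.log (r / s) := by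
      rw [← Real.log_inv, inv_div]
    rw [hle] at hl
    have := mul_le_mul_of_nonneg_left hl h.le
    have hsr : r * (s / r) = s := by field_simp
    nlinarith [this]

/-- key inequality: `p log(p/q) ≥ p - q + (p-q)²/(2 max p q)` for `p ≥ 0 < q`. -/
lemma key_log_ineq (p q : ℝ) (hp : 0 ≤ p) (hq : 0 < q) :
    p - q + (p - q) ^ 2 / (2 * max p q) ≤ p * Real.log (p / q) := by
  rcases le_total p q with hle | hle
  · have hmax : max p q = q := max_eq_right hle
    have hc := core1 (p / q) (div_nonneg hp hq.le) ((div_le_one hq).2 hle)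
    have hm := mul_le_mul_of_nonneg_left hc hq.le
    have h1 : q * (p / q * Real.log (p / q) - p / q + 1) =
        p * Real.log (p / q) - p + q := by field_simp
    have h2 : q * ((1 - p / q) ^ 2 / 2) = (p - q) ^ 2 / (2 * q) := by
      field_simp; ring
    rw [h1, h2] at hm
    rw [hmax]
    linarith
  · have hp0 : 0 < p := lt_of_lt_of_le hq hle
    have hmax : max p q = p := max_eq_left hle
    have hc := core2 (q / p) (div_pos hq hp0) ((div_le_one hp0).2 hle)
    have hm := mul_le_mul_of_nonneg_left hc hp0.le
    have hl : -Real.log (q / p) = Real.log (p / q) := by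
      rw [← Real.log_inv, inv_div]
    have h1 : p * (1 - q / p + (1 - q / p) ^ 2 / 2) =
        p - q + (p - q) ^ 2 / (2 * p) := by field_simp
    rw [h1, hl] at hm
    rw [hmax]
    linarith
open MeasureTheory in
/-- conditional Gibbs: `∫_A τ log(τ/q) ≥ a log(a/b)` where `a = ∫_A τ`, `b = ∫_A q > 0`. -/
lemma set_gibbs (τ q : ℝ → ℝ) (hτ0 : ∀ x, 0 ≤ τ x) (hq : ∀ x, 0 < q x)
    (A : Set ℝ) (hA : MeasurableSet A)
    (hfi : IntegrableOn (fun x => τ x * Real.log (τ x / q x)) A)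
    (hτA : IntegrableOn τ A) (hqA : IntegrableOn q A)
    (hb : 0 < ∫ x in A, q x) :
    (∫ x in A, τ x) * Real.log ((∫ x in A, τ x) / (∫ x in A, q x)) ≤
      ∫ x in A, τ x * Real.log (τ x / q x) := by
  set a := ∫ x in A, τ x with ha
  set b := ∫ x in A, q x with hbdef
  have ha0 : 0 ≤ a := setIntegral_nonneg hA fun x _ => hτ0 x
  rcases eq_or_lt_of_le ha0 with haz | hap
  · -- a = 0 : τ = 0 a.e. on A, integrand = 0 a.e. on A
    have hτz : τ =ᵐ[volume.restrict A] 0 := by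
      rw [← integral_eq_zero_iff_of_nonneg (fun x => hτ0 x) hτA]
      exact haz.symm
    have hfz : (fun x => τ x * Real.log (τ x / q x)) =ᵐ[volume.restrict A] 0 := by
      filter_upwards [hτz] with x hx
      simp [hx]
    have hz : ∫ x in A, τ x * Real.log (τ x / q x) = 0 := by
      rw [integral_congr_ae hfz]; simp
    rw [hz, ← haz]; simp
  · -- a > 0
    have hc : 0 < a / b := div_pos hap hb
    -- pointwise bound on all of ℝ
    have hpt : ∀ x, 0 ≤ τ x * Real.log (τ x / q x)
        - τ x * Real.log (a / b) - τ x + (a / b) * q x := by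
      intro x
      have hs : 0 < a / b * q x := mul_pos hc (hq x)
      have hg := gibbs_pt (τ x) (a / b * q x) (hτ0 x) hs
      rcases eq_or_lt_of_le (hτ0 x) with hz | hz
      · rw [← hz]
        simpa using mul_nonneg hc.le (hq x).le
      · have hlog : Real.log (τ x / (a / b * q x)) =
            Real.log (τ x / q x) - Real.log (a / b) := by
          rw [show τ x / (a / b * q x) = (τ x / q x) / (a / b) by field_simp]
          rw [Real.log_div (ne_of_gt (div_pos hz (hq x))) (ne_of_gt hc)]
        rw [hlog] at hg
        nlinarith [hg]
    have h0 : (0:ℝ) ≤ ∫ x in A, (τ x * Real.log (τ x / q x)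
        - τ x * Real.log (a / b) - τ x + (a / b) * q x) := by
      refine setIntegral_nonneg hA fun x _ => hpt x
    have hi2 : Integrable (fun x => τ x * Real.log (a / b)) (volume.restrict A) :=
      hτA.mul_const _
    have hi1 : Integrable (fun x => τ x * Real.log (τ x / q x) - τ x * Real.log (a / b))
        (volume.restrict A) := hfi.sub hi2
    have hi3 : Integrable (fun x => τ x * Real.log (τ x / q x) - τ x * Real.log (a / b) - τ x)
        (volume.restrict A) := hi1.sub hτA
    have hi4 : Integrable (fun x => (a / b) * q x) (volume.restrict A) := hqA.const_mul _
    have heq : ∫ x in A, (τ x * Real.log (τ x / q x)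
          - τ x * Real.log (a / b) - τ x + (a / b) * q x)
        = (∫ x in A, τ x * Real.log (τ x / q x)) - a * Real.log (a / b) - a + (a / b) * b := by
      rw [integral_add hi3 hi4, integral_sub hi1 hτA, integral_sub hfi hi2,
        integral_mul_const, integral_const_mul]
    rw [heq] at h0
    have hbb : a / b * b = a := by field_simp
    rw [hbb] at h0
    linarith

/-- For the exponential-polynomial (maximum-entropy) density
`q̆(x) = exp(-∑_{i=0}^{2n} λᵢ xⁱ)` and any probability density `τ` with the same power
moments up to order `2n`, the Kolmogorov (total variation of the distribution functions)
distance satisfies `V(q̆,τ) ≤ 3(−1 + (1 + (4/9)(H[q̆] − H[τ]))^½)^½`. -/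
theorem tv_bound_maxent (n : ℕ) (lam : ℕ → ℝ) (qb : ℝ → ℝ)
    (hqb : ∀ x : ℝ, qb x = Real.exp (-(∑ i ∈ Finset.range (2 * n + 1), lam i * x ^ i)))
    (hqb1 : ∫ x : ℝ, qb x = 1)
    (hqbmom : ∀ l ≤ 2 * n, Integrable (fun x : ℝ => |x| ^ l * qb x))
    (τ : ℝ → ℝ) (hτ0 : ∀ x, 0 ≤ τ x) (hτ1 : ∫ x : ℝ, τ x = 1)
    (hmatch : ∀ l ≤ 2 * n, ∫ x : ℝ, x ^ l * τ x = ∫ x : ℝ, x ^ l * qb x)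
    (hτlog : Integrable (fun x : ℝ => τ x * Real.log (τ x)))
    (hτmom : ∀ l ≤ 2 * n, Integrable (fun x : ℝ => x ^ l * τ x)) :
    (⨆ x : ℝ, |∫ t in Set.Iic x, (qb t - τ t)|) ≤
      3 * Real.sqrt (-1 + Real.sqrt (1 + (4 / 9) *
        ((-∫ x : ℝ, qb x * Real.log (qb x)) - (-∫ x : ℝ, τ x * Real.log (τ x))))) := by
  have hqpos : ∀ x, 0 < qb x := fun x => by rw [hqb]; exact Real.exp_pos _
  have hqcont : Continuous qb := by
    have h : qb = fun x => Real.exp (-(∑ i ∈ Finset.range (2 * n + 1), lam i * x ^ i)) :=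
      funext hqb
    rw [h]
    exact Real.continuous_exp.comp
      ((continuous_finset_sum _ fun i _ => (continuous_const.mul (continuous_pow i))).neg)
  have hqi : Integrable qb := by
    have := hqbmom 0 (Nat.zero_le _); simpa using this
  have hτi : Integrable τ := by
    have := hτmom 0 (Nat.zero_le _); simpa using this
  have hqmom' : ∀ i ≤ 2 * n, Integrable (fun x : ℝ => x ^ i * qb x) := by
    intro i hi
    refine (hqbmom i hi).mono' ?_ ?_
    · exact ((continuous_pow i).mul hqcont).aestronglyMeasurable
    · filter_upwards with x
      rw [Real.norm_eq_abs, abs_mul, abs_pow, abs_of_pos (hqpos x)]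
  have hlogq : ∀ x : ℝ, Real.log (qb x) = -(∑ i ∈ Finset.range (2 * n + 1), lam i * x ^ i) := by
    intro x; rw [hqb]; exact Real.log_exp _
  -- rewrite q log q and τ log q as sums
  have hqfun : (fun x => qb x * Real.log (qb x))
      = fun x => -∑ i ∈ Finset.range (2 * n + 1), lam i * (x ^ i * qb x) := by
    funext x
    rw [hlogq x, mul_neg, Finset.mul_sum]
    congr 1
    exact Finset.sum_congr rfl fun i _ => by ring
  have hτqfun : (fun x => τ x * Real.log (qb x))
      = fun x => -∑ i ∈ Finset.range (2 * n + 1), lam i * (x ^ i * τ x) := by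
    funext x
    rw [hlogq x, mul_neg, Finset.mul_sum]
    congr 1
    exact Finset.sum_congr rfl fun i _ => by ring
  have hmem : ∀ i ∈ Finset.range (2 * n + 1), i ≤ 2 * n := fun i hi =>
    Nat.lt_succ_iff.mp (Finset.mem_range.mp hi)
  have hτlogq : Integrable (fun x => τ x * Real.log (qb x)) := by
    rw [hτqfun]
    exact (integrable_finset_sum _ fun i hi => (hτmom i (hmem i hi)).const_mul _).neg
  have e1 : ∫ x : ℝ, qb x * Real.log (qb x)
      = -∑ i ∈ Finset.range (2 * n + 1), lam i * ∫ x : ℝ, x ^ i * qb x := by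
    rw [hqfun, integral_neg,
      integral_finset_sum _ fun i hi => (hqmom' i (hmem i hi)).const_mul _]
    simp_rw [integral_const_mul]
  have e2 : ∫ x : ℝ, τ x * Real.log (qb x)
      = -∑ i ∈ Finset.range (2 * n + 1), lam i * ∫ x : ℝ, x ^ i * τ x := by
    rw [hτqfun, integral_neg,
      integral_finset_sum _ fun i hi => (hτmom i (hmem i hi)).const_mul _]
    simp_rw [integral_const_mul]
  have hkey : ∫ x : ℝ, qb x * Real.log (qb x) = ∫ x : ℝ, τ x * Real.log (qb x) := by
    rw [e1, e2]
    congr 1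
    exact Finset.sum_congr rfl fun i hi => by rw [hmatch i (hmem i hi)]
  -- KL integrand
  have hfeq : (fun x => τ x * Real.log (τ x / qb x))
      = fun x => τ x * Real.log (τ x) - τ x * Real.log (qb x) := by
    funext x
    rcases eq_or_lt_of_le (hτ0 x) with h | h
    · simp [← h]
    · rw [Real.log_div h.ne' (hqpos x).ne']; ring
  have hfi : Integrable (fun x => τ x * Real.log (τ x / qb x)) := by
    rw [hfeq]; exact hτlog.sub hτlogq
  set D := (-∫ x : ℝ, qb x * Real.log (qb x)) - (-∫ x : ℝ, τ x * Real.log (τ x)) with hD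
  have hDf : ∫ x : ℝ, τ x * Real.log (τ x / qb x) = D := by
    rw [hfeq, integral_sub hτlog hτlogq, hD, hkey]; ring
  -- per-point bound
  refine ciSup_le fun x => ?_
  set A := Set.Iic x with hAdef
  have hA : MeasurableSet A := measurableSet_Iic
  set a := ∫ t in A, τ t with ha
  set b := ∫ t in A, qb t with hb
  have hsupp : ∀ S : Set ℝ, Function.support qb ∩ S = S := by
    intro S; ext y; simp [Function.support, (hqpos y).ne']
  have hbpos : 0 < b := by
    rw [hb, setIntegral_pos_iff_support_of_nonneg_ae
      (Filter.Eventually.of_forall fun y => (hqpos y).le) hqi.integrableOn]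
    rw [hsupp A, hAdef, Real.volume_Iic]
    exact ENNReal.zero_lt_top
  have hcompl : Aᶜ = Set.Ioi x := by rw [hAdef, Set.compl_Iic]
  have hbc : ∫ t in Aᶜ, qb t = 1 - b := by
    have := integral_add_compl hA hqi
    rw [hqb1] at this; linarith
  have hac : ∫ t in Aᶜ, τ t = 1 - a := by
    have := integral_add_compl hA hτi
    rw [hτ1] at this; linarith
  have hbcpos : 0 < 1 - b := by
    rw [← hbc]
    rw [setIntegral_pos_iff_support_of_nonneg_ae
      (Filter.Eventually.of_forall fun y => (hqpos y).le) hqi.integrableOn]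
    rw [hsupp Aᶜ, hcompl, Real.volume_Ioi]
    exact ENNReal.zero_lt_top
  have ha0 : 0 ≤ a := setIntegral_nonneg hA fun y _ => hτ0 y
  have ha1 : a ≤ 1 := by
    have : 0 ≤ ∫ t in Aᶜ, τ t := setIntegral_nonneg hA.compl fun y _ => hτ0 y
    rw [hac] at this; linarith
  have hb1 : b ≤ 1 := by linarith
  -- lower bounds on the two pieces of KL
  have hg1 : a - b + (a - b) ^ 2 / (2 * max a b) ≤ ∫ t in A, τ t * Real.log (τ t / qb t) :=
    le_trans (key_log_ineq a b ha0 hbpos)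
      (set_gibbs τ qb hτ0 hqpos A hA hfi.integrableOn hτi.integrableOn hqi.integrableOn hbpos)
  have hg2 : (1 - a) - (1 - b) + ((1 - a) - (1 - b)) ^ 2 / (2 * max (1 - a) (1 - b))
      ≤ ∫ t in Aᶜ, τ t * Real.log (τ t / qb t) := by
    have h := le_trans
      (key_log_ineq (∫ t in Aᶜ, τ t) (∫ t in Aᶜ, qb t)
        (setIntegral_nonneg hA.compl fun y _ => hτ0 y) (by rw [hbc]; exact hbcpos))
      (set_gibbs τ qb hτ0 hqpos Aᶜ hA.compl hfi.integrableOn hτi.integrableOn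
        hqi.integrableOn (by rw [hbc]; exact hbcpos))
    rwa [hac, hbc] at h
  have hsplit : (∫ t in A, τ t * Real.log (τ t / qb t))
      + (∫ t in Aᶜ, τ t * Real.log (τ t / qb t)) = D := by
    rw [integral_add_compl hA hfi, hDf]
  -- D ≥ (a-b)^2
  have hmaxpos1 : 0 < max a b := lt_max_of_lt_right hbpos
  have hmaxpos2 : 0 < max (1 - a) (1 - b) := lt_max_of_lt_right hbcpos
  have hmax1 : max a b ≤ 1 := max_le ha1 hb1
  have hmax2 : max (1 - a) (1 - b) ≤ 1 := max_le (by linarith) (by linarith)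
  have haux1 : (a - b) ^ 2 / 2 ≤ (a - b) ^ 2 / (2 * max a b) := by
    apply div_le_div_of_nonneg_left (sq_nonneg _) (by positivity)
    linarith
  have haux2 : (a - b) ^ 2 / 2 ≤ ((1 - a) - (1 - b)) ^ 2 / (2 * max (1 - a) (1 - b)) := by
    rw [show ((1 - a) - (1 - b)) ^ 2 = (a - b) ^ 2 by ring]
    apply div_le_div_of_nonneg_left (sq_nonneg _) (by positivity)
    linarith
  have hDge : (a - b) ^ 2 ≤ D := by
    have h1 := le_trans (by linarith [haux1] : a - b + (a - b) ^ 2 / 2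
      ≤ a - b + (a - b) ^ 2 / (2 * max a b)) hg1
    have h2 := le_trans (by linarith [haux2] : (1 - a) - (1 - b) + (a - b) ^ 2 / 2
      ≤ (1 - a) - (1 - b) + ((1 - a) - (1 - b)) ^ 2 / (2 * max (1 - a) (1 - b))) hg2
    linarith [hsplit, h1, h2]
  have hd1 : (a - b) ^ 2 ≤ 1 := by nlinarith
  -- value of the set integral
  have hval : ∫ t in A, (qb t - τ t) = b - a := by
    rw [integral_sub hqi.integrableOn hτi.integrableOn]
  rw [hval]
  -- final algebra
  have hDnn : 0 ≤ D := le_trans (sq_nonneg _) hDge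
  have h1 : (1 + (b - a) ^ 2 / 9) ^ 2 ≤ 1 + (4 / 9) * D := by nlinarith
  have h2 : 1 + (b - a) ^ 2 / 9 ≤ Real.sqrt (1 + (4 / 9) * D) :=
    (Real.le_sqrt (by positivity) (by linarith)).2 h1
  have h3 : (b - a) ^ 2 / 9 ≤ -1 + Real.sqrt (1 + (4 / 9) * D) := by linarith
  have h4 : Real.sqrt ((b - a) ^ 2 / 9) = |b - a| / 3 := by
    rw [show (b - a) ^ 2 / 9 = (|b - a| / 3) ^ 2 by rw [div_pow, sq_abs]; norm_num]
    exact Real.sqrt_sq (by positivity)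
  have h5 : |b - a| / 3 ≤ Real.sqrt (-1 + Real.sqrt (1 + (4 / 9) * D)) := by
    rw [← h4]; exact Real.sqrt_le_sqrt h3
  linarith
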